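/- Let X, Y ⊆ S^n be closed sets with X ∪ Y = S^n, and let B^X, B^Y ⊆ S^n be closed metric balls with antipodal centers satisfying Vol(B^X) = Vol(X) and Vol(B^Y) = Vol(Y). Assume the isoperimetric inequality on S^n: for any closed set A and closed ball B of the same volume, Vol(A_ε) ≥ Vol(B_ε) for all ε > 0. Then for every ε > 0, Vol((X ∩ Y)_ε) ≥ Vol((B^X ∩ B^Y)_ε). -/

import Mathlib

open Metric MeasureTheory Set
open scoped ENNReal NNReal

variable {F : Type*} [NormedAddCommGroup F] [InnerProductSpace ℝ F]

lemma geo_ne_zero {z y : F} (hz : ‖z‖ = 1) (hy : ‖y‖ = 1) (hzy : y ≠ -z) {t : ℝ}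
    (ht0 : 0 ≤ t) (ht1 : t ≤ 1) : (1 - t) • z + t • y ≠ 0 := by
  intro h
  have h1 : (1 - t) • z = -(t • y) := eq_neg_of_add_eq_zero_left h
  have h2 : ‖(1 - t) • z‖ = ‖t • y‖ := by rw [h1, norm_neg]
  rw [norm_smul, norm_smul, hz, hy, mul_one, mul_one, Real.norm_eq_abs, Real.norm_eq_abs,
    abs_of_nonneg (by linarith), abs_of_nonneg ht0] at h2
  have ht : t = 1/2 := by linarith
  apply hzy
  have h3 : z + y = (2:ℝ) • ((1 - t) • z + t • y) := by rw [ht]; module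
  rw [h, smul_zero] at h3
  exact eq_neg_of_add_eq_zero_right h3

lemma geo_inner {z y : F} (hz : ‖z‖ = 1) (hy : ‖y‖ = 1) {t : ℝ}
    (ht0 : 0 ≤ t) (ht1 : t ≤ 1) :
    inner ℝ z y * ‖(1 - t) • z + t • y‖ ≤ (inner ℝ z ((1 - t) • z + t • y) : ℝ) := by
  set c : ℝ := inner ℝ z y with hc
  have hc1 : c ≤ 1 := by
    calc c ≤ ‖z‖ * ‖y‖ := real_inner_le_norm z y
    _ = 1 := by rw [hz, hy]; ring
  have hcm : -1 ≤ c := by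
    have h := abs_real_inner_le_norm z y
    rw [hz, hy, mul_one] at h
    linarith [(abs_le.1 h).1]
  have hzz : (inner ℝ z z : ℝ) = 1 := by
    rw [real_inner_self_eq_norm_sq, hz]; norm_num
  have hiv : (inner ℝ z ((1 - t) • z + t • y) : ℝ) = (1 - t) + t * c := by
    rw [inner_add_right, real_inner_smul_right, real_inner_smul_right, hzz]; ring
  have hnv : ‖(1 - t) • z + t • y‖ ^ 2 = (1-t)^2 + 2*t*(1-t)*c + t^2 := by
    rw [norm_add_sq_real, norm_smul, norm_smul, real_inner_smul_left, real_inner_smul_right,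
      Real.norm_eq_abs, Real.norm_eq_abs, abs_of_nonneg (by linarith), abs_of_nonneg ht0, hz, hy]
    ring
  set N := ‖(1 - t) • z + t • y‖ with hN
  have hN0 : 0 ≤ N := norm_nonneg _
  have hN1 : N ≤ 1 := by
    nlinarith [mul_nonneg (mul_nonneg ht0 (by linarith : (0:ℝ) ≤ 1 - t)) (by linarith : (0:ℝ) ≤ 1 - c)]
  rw [hiv]
  rcases le_or_gt 0 c with h | h
  · nlinarith
  · rcases le_or_gt 0 ((1-t) + t*c) with hA | hA
    · nlinarith [mul_nonpos_of_nonpos_of_nonneg h.le hN0]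
    · have ht0' : 0 < t := by nlinarith
      have hfac : (1-t) + 2*t*c < 0 := by nlinarith [mul_neg_of_pos_of_neg ht0' h]
      have P : (1 - c^2) * ((1-t) * ((1-t) + 2*t*c)) ≤ 0 :=
        mul_nonpos_of_nonneg_of_nonpos (by nlinarith)
          (mul_nonpos_of_nonneg_of_nonpos (by linarith) hfac.le)
      have key : ((1-t) + t*c)^2 ≤ c^2 * N^2 := by nlinarith [P, hnv]
      have hcN0 : c * N ≤ 0 := mul_nonpos_of_nonpos_of_nonneg h.le hN0
      nlinarith [key, hcN0]

/-- units: smaller distance from bigger inner product -/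
lemma dist_le_of_inner_ge {z w y : F} (hz : ‖z‖ = 1) (hw : ‖w‖ = 1) (hy : ‖y‖ = 1)
    (h : (inner ℝ z y : ℝ) ≤ inner ℝ z w) : dist z w ≤ dist z y := by
  have h1 : ‖z - w‖ ^ 2 = 2 - 2 * inner ℝ z w := by rw [norm_sub_sq_real, hz, hw]; ring
  have h2 : ‖z - y‖ ^ 2 = 2 - 2 * inner ℝ z y := by rw [norm_sub_sq_real, hz, hy]; ring
  rw [dist_eq_norm, dist_eq_norm]
  nlinarith [norm_nonneg (z - w), norm_nonneg (z - y)]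

/-- key geodesic lemma: between two non-antipodal unit vectors there is a point of the sphere
on the "entering boundary". -/
lemma exists_enter {X' Y' : Set F} (hX' : IsClosed X') (hY' : IsClosed Y')
    (hcov : sphere (0:F) 1 ⊆ X' ∪ Y') {z y : F} (hz : ‖z‖ = 1) (hy : ‖y‖ = 1)
    (hzy : y ≠ -z) (hzX : z ∈ X') (hyY : y ∈ Y') :
    ∃ w ∈ X' ∩ Y', dist z w ≤ dist z y := by
  set v : ℝ → F := fun t => (1 - t) • z + t • y with hv
  set g : ℝ → F := fun t => ‖v t‖⁻¹ • v t with hg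
  have hvne : ∀ t ∈ Icc (0:ℝ) 1, v t ≠ 0 := fun t ht => geo_ne_zero hz hy hzy ht.1 ht.2
  have hgnorm : ∀ t ∈ Icc (0:ℝ) 1, ‖g t‖ = 1 := by
    intro t ht
    rw [hg, norm_smul, norm_inv, norm_norm, inv_mul_cancel₀ (norm_ne_zero_iff.2 (hvne t ht))]
  have hvcont : Continuous v := by fun_prop
  have hgcont : ContinuousOn g (Icc 0 1) := by
    apply ContinuousOn.smul _ hvcont.continuousOn
    exact (hvcont.norm.continuousOn).inv₀ (fun t ht => norm_ne_zero_iff.2 (hvne t ht))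
  have hg1 : g 1 = y := by simp [hg, hv, hy]
  have hg0 : g 0 = z := by simp [hg, hv, hz]
  set A : Set ℝ := Icc (0:ℝ) 1 ∩ g ⁻¹' Y' with hA
  have hAclosed : IsClosed A := hgcont.preimage_isClosed_of_isClosed isClosed_Icc hY'
  have hAne : A.Nonempty := ⟨1, ⟨by norm_num, by norm_num⟩, by simpa [hg1] using hyY⟩
  have hAbdd : BddBelow A := bddBelow_Icc.mono inter_subset_left
  set T := sInf A with hT
  have hTA : T ∈ A := hAclosed.csInf_mem hAne hAbdd
  have hTI : T ∈ Icc (0:ℝ) 1 := hTA.1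
  have hwY : g T ∈ Y' := hTA.2
  have hsph : ∀ t ∈ Icc (0:ℝ) 1, g t ∈ Metric.sphere (0:F) 1 := by
    intro t ht; rw [mem_sphere_zero_iff_norm]; exact hgnorm t ht
  have hwX : g T ∈ X' := by
    rcases eq_or_lt_of_le hTI.1 with h0 | h0
    · rw [← h0, hg0]; exact hzX
    · -- approach from the left
      set u : ℕ → ℝ := fun k => T - T * (1 / (k + 1)) with hu
      have hu_mem : ∀ k, u k ∈ Icc (0:ℝ) 1 := by
        intro k
        have hk : 0 < (k:ℝ) + 1 := by positivity
        have h1 : (1:ℝ)/(k+1) ≤ 1 := by rw [div_le_one hk]; linarith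
        have h2 : (0:ℝ) < 1/(k+1) := by positivity
        simp only [hu]
        constructor
        · nlinarith [hTI.1, hTI.2]
        · nlinarith [hTI.1, hTI.2]
      have hu_lt : ∀ k, u k < T := by
        intro k
        have h2 : (0:ℝ) < 1/(k+1) := by positivity
        have := mul_pos h0 h2
        simp only [hu]; linarith
      have hu_tend : Filter.Tendsto u Filter.atTop (nhds T) := by
        have h1 : Filter.Tendsto (fun k : ℕ => (1:ℝ)/(k+1)) Filter.atTop (nhds 0) :=
          tendsto_one_div_add_atTop_nhds_zero_nat
        have := Filter.Tendsto.const_sub T ((h1.const_mul T))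
        simpa [hu, one_div] using this
      have hmemX : ∀ k, g (u k) ∈ X' := by
        intro k
        have hnotA : u k ∉ A := fun hin => absurd (csInf_le hAbdd hin) (not_le.2 (hu_lt k))
        have : g (u k) ∉ Y' := fun hmem => hnotA ⟨hu_mem k, hmem⟩
        rcases hcov (hsph _ (hu_mem k)) with h | h
        · exact h
        · exact absurd h this
      have htendg : Filter.Tendsto (g ∘ u) Filter.atTop (nhds (g T)) := by
        apply (hgcont T hTI).tendsto.comp
        rw [tendsto_nhdsWithin_iff]
        exact ⟨hu_tend, Filter.Eventually.of_forall hu_mem⟩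
      exact hX'.mem_of_tendsto htendg (Filter.Eventually.of_forall hmemX)
  refine ⟨g T, ⟨hwX, hwY⟩, ?_⟩
  apply dist_le_of_inner_ge hz (hgnorm T hTI) hy
  have hvpos : 0 < ‖v T‖ := norm_pos_iff.2 (hvne T hTI)
  have := geo_inner hz hy hTI.1 hTI.2
  have hiw : (inner ℝ z (g T) : ℝ) = ‖v T‖⁻¹ * inner ℝ z (v T) := by
    rw [hg, real_inner_smul_right]
  rw [hiw]
  have h2 : ‖v T‖⁻¹ * (inner ℝ z y * ‖v T‖) ≤ ‖v T‖⁻¹ * inner ℝ z (v T) := by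
    apply mul_le_mul_of_nonneg_left _ (by positivity)
    simpa [hv] using this
  have h0' : ‖v T‖ ≠ 0 := hvpos.ne'
  calc (inner ℝ z y : ℝ) = ‖v T‖⁻¹ * (inner ℝ z y * ‖v T‖) := by field_simp
  _ ≤ ‖v T‖⁻¹ * inner ℝ z (v T) := h2

variable {n : ℕ}

abbrev Euc (n : ℕ) := EuclideanSpace ℝ (Fin (n + 1))
abbrev Sph (n : ℕ) := ↥(sphere (0 : Euc n) 1)
local notation "E" => Euc n
local notation "α" => Sph n

lemma norm_coe_sphere (z : α) : ‖(z : E)‖ = 1 := mem_sphere_zero_iff_norm.1 z.2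

lemma aux_incl {X Y : Set α} (hX : IsClosed X) (hY : IsClosed Y)
    (hXY : X ∪ Y = Set.univ) (hpc : IsPreconnected (Set.univ : Set α))
    {ε : ℝ} (hε : 0 < ε) {z : α} (hzX : z ∈ X) (hz2 : z ∈ cthickening ε Y) :
    z ∈ cthickening ε (X ∩ Y) := by
  have hYne : Y.Nonempty := by
    rcases Y.eq_empty_or_nonempty with h | h
    · rw [h, cthickening_empty] at hz2; exact absurd hz2 (notMem_empty z)
    · exact h
  have hinf : infDist z Y ≤ ε := by
    have h := mem_cthickening_iff.1 hz2
    exact ENNReal.toReal_le_of_le_ofReal hε.le h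
  obtain ⟨y, hyY, hyd⟩ := hY.isCompact.exists_infDist_eq_dist hYne z
  have hdzy : dist z y ≤ ε := by rw [← hyd]; exact hinf
  by_cases hanti : (y : E) = -(z : E)
  · have h2 : dist z y = 2 := by
      rw [Subtype.dist_eq, dist_eq_norm, hanti, sub_neg_eq_add, ← two_smul ℝ, norm_smul,
        norm_coe_sphere]
      norm_num
    obtain ⟨w, -, hwK⟩ := isPreconnected_closed_iff.1 hpc X Y hX hY
      (by rw [hXY]) ⟨z, trivial, hzX⟩ ⟨y, trivial, hyY⟩
    refine mem_cthickening_of_dist_le z w ε _ hwK ?_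
    calc dist z w ≤ ‖(z : E)‖ + ‖(w : E)‖ := by
          rw [Subtype.dist_eq, dist_eq_norm]; exact norm_sub_le _ _
    _ ≤ ε := by rw [norm_coe_sphere, norm_coe_sphere]; linarith
  · have hX' : IsClosed (Subtype.val '' X) :=
      (hX.isCompact.image continuous_subtype_val).isClosed
    have hY' : IsClosed (Subtype.val '' Y) :=
      (hY.isCompact.image continuous_subtype_val).isClosed
    have hcov : sphere (0:E) 1 ⊆ Subtype.val '' X ∪ Subtype.val '' Y := by
      intro u hu
      have : (⟨u, hu⟩ : α) ∈ X ∪ Y := hXY ▸ trivial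
      rcases this with h | h
      · exact Or.inl ⟨⟨u, hu⟩, h, rfl⟩
      · exact Or.inr ⟨⟨u, hu⟩, h, rfl⟩
    obtain ⟨w₀, hw₀, hwd⟩ := exists_enter hX' hY' hcov (norm_coe_sphere z)
      (norm_coe_sphere y) hanti ⟨z, hzX, rfl⟩ ⟨y, hyY, rfl⟩
    rw [← Set.image_inter Subtype.val_injective] at hw₀
    obtain ⟨w, hwK, rfl⟩ := hw₀
    refine mem_cthickening_of_dist_le z w ε _ hwK ?_
    rw [Subtype.dist_eq]
    calc dist (z:E) (w:E) ≤ dist (z:E) (y:E) := hwd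
    _ ≤ ε := by rw [← Subtype.dist_eq]; exact hdzy

lemma incl {X Y : Set α} (hX : IsClosed X) (hY : IsClosed Y)
    (hXY : X ∪ Y = Set.univ) (hpc : IsPreconnected (Set.univ : Set α))
    {ε : ℝ} (hε : 0 < ε) :
    cthickening ε X ∩ cthickening ε Y ⊆ cthickening ε (X ∩ Y) := by
  rintro z ⟨h1, h2⟩
  have : z ∈ X ∪ Y := hXY ▸ trivial
  rcases this with h | h
  · exact aux_incl hX hY hXY hpc hε h h2
  · rw [Set.inter_comm]
    exact aux_incl hY hX (by rw [Set.union_comm]; exact hXY) hpc hε h h1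

lemma abs_coord_le_norm {m : ℕ} (x : EuclideanSpace ℝ (Fin m)) (i : Fin m) : |x i| ≤ ‖x‖ := by
  rw [EuclideanSpace.norm_eq]
  rw [← Real.sqrt_sq_eq_abs]
  apply Real.sqrt_le_sqrt
  have : |x i| ^ 2 ≤ ∑ j, ‖x j‖ ^ 2 := by
    rw [sq_abs]
    refine Finset.single_le_sum (f := fun j => ‖x j‖ ^ 2) (fun j _ => by positivity)
      (Finset.mem_univ i) |>.trans_eq' ?_
    rw [Real.norm_eq_abs, sq_abs]
  simpa [sq_abs] using this

/-- normalization is 2-Lipschitz outside the unit ball -/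
lemma lip_normalize {F : Type*} [NormedAddCommGroup F] [NormedSpace ℝ F] :
    LipschitzOnWith 2 (fun x : F => ‖x‖⁻¹ • x) {x : F | 1 ≤ ‖x‖} := by
  apply LipschitzOnWith.of_dist_le_mul
  intro x hx y hy
  simp only [Set.mem_setOf_eq] at hx hy
  have hx0 : (0:ℝ) < ‖x‖ := lt_of_lt_of_le one_pos hx
  have hy0 : (0:ℝ) < ‖y‖ := lt_of_lt_of_le one_pos hy
  rw [dist_eq_norm, dist_eq_norm]
  have key : ‖x‖⁻¹ • x - ‖y‖⁻¹ • y = ‖x‖⁻¹ • (x - y) + (‖x‖⁻¹ - ‖y‖⁻¹) • y := by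
    rw [smul_sub, sub_smul]; abel
  rw [key]
  have h1 : ‖(‖x‖⁻¹ - ‖y‖⁻¹) • y‖ = |‖x‖⁻¹ - ‖y‖⁻¹| * ‖y‖ := by
    rw [norm_smul, Real.norm_eq_abs]
  have h2 : |‖x‖⁻¹ - ‖y‖⁻¹| * ‖y‖ ≤ ‖x‖⁻¹ * ‖x - y‖ := by
    have habs : |‖x‖⁻¹ - ‖y‖⁻¹| = |‖y‖ - ‖x‖| / (‖x‖ * ‖y‖) := by
      rw [eq_div_iff (by positivity), ← abs_of_pos (show (0:ℝ) < ‖x‖ * ‖y‖ by positivity),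
        ← abs_mul]
      congr 1
      field_simp
    rw [habs]
    have hxy : |‖y‖ - ‖x‖| ≤ ‖x - y‖ := by
      rw [abs_sub_comm]
      exact (abs_norm_sub_norm_le x y).trans_eq (by rw [])
    calc |‖y‖ - ‖x‖| / (‖x‖ * ‖y‖) * ‖y‖ = |‖y‖ - ‖x‖| / ‖x‖ := by field_simp
    _ ≤ ‖x - y‖ / ‖x‖ := by gcongr
    _ = ‖x‖⁻¹ * ‖x - y‖ := by rw [div_eq_inv_mul]
  calc ‖‖x‖⁻¹ • (x - y) + (‖x‖⁻¹ - ‖y‖⁻¹) • y‖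
      ≤ ‖‖x‖⁻¹ • (x - y)‖ + ‖(‖x‖⁻¹ - ‖y‖⁻¹) • y‖ := norm_add_le _ _
  _ ≤ ‖x‖⁻¹ * ‖x - y‖ + ‖x‖⁻¹ * ‖x - y‖ := by
      rw [h1, norm_smul, Real.norm_eq_abs, abs_of_pos (by positivity : (0:ℝ) < ‖x‖⁻¹)]
      exact add_le_add le_rfl h2
  _ ≤ 2 * ‖x - y‖ := by
      have hinv : ‖x‖⁻¹ ≤ 1 := by rw [inv_le_one_iff₀]; right; exact hx
      have := norm_nonneg (x - y)
      nlinarith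

-- insertion map
noncomputable def embFace {m : ℕ} (i : Fin (m + 1)) (s : ℝ) :
    EuclideanSpace ℝ (Fin m) → EuclideanSpace ℝ (Fin (m + 1)) :=
  fun y => (WithLp.equiv 2 (Fin (m+1) → ℝ)).symm
    (Fin.insertNth i s ((WithLp.equiv 2 (Fin m → ℝ)) y))

lemma embFace_apply_same {m : ℕ} (i : Fin (m + 1)) (s : ℝ) (y : EuclideanSpace ℝ (Fin m)) :
    embFace i s y i = s := by
  simp [embFace]

lemma embFace_apply_succAbove {m : ℕ} (i : Fin (m + 1)) (s : ℝ) (y : EuclideanSpace ℝ (Fin m))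
    (j : Fin m) : embFace i s y (i.succAbove j) = y j := by
  simp [embFace]

lemma embFace_isometry {m : ℕ} (i : Fin (m + 1)) (s : ℝ) : Isometry (embFace i s) := by
  intro y y'
  rw [edist_dist, edist_dist]
  congr 1
  rw [EuclideanSpace.dist_eq, EuclideanSpace.dist_eq]
  congr 1
  rw [Fin.sum_univ_succAbove (fun j => dist (embFace i s y j) (embFace i s y' j) ^ 2) i]
  simp [embFace_apply_same, embFace_apply_succAbove]

noncomputable def cubeQ (m : ℕ) : Set (EuclideanSpace ℝ (Fin m)) := {y | ∀ j, |y j| ≤ 1}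

lemma cubeQ_hausdorff_ne_top (m : ℕ) : μH[(m : ℝ)] (cubeQ m) ≠ ⊤ := by
  classical
  set e : (Fin m → ℝ) → EuclideanSpace ℝ (Fin m) := ⇑(WithLp.equiv 2 (Fin m → ℝ)).symm with he
  set K : ℝ≥0 := (m : ℝ≥0) ^ (2⁻¹ : ℝ) with hK
  have hlip : LipschitzWith K e := by
    intro a b
    have := PiLp.antilipschitzWith_ofLp 2 (fun _ : Fin m => ℝ) (e a) (e b)
    simpa [he, hK] using this
  have hsub : cubeQ m ⊆ e '' (Set.pi Set.univ (fun _ : Fin m => Icc (-1:ℝ) 1)) := by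
    intro x hx
    refine ⟨(WithLp.equiv 2 (Fin m → ℝ)) x, fun j _ => ?_, by simp [he]⟩
    exact abs_le.1 (hx j)
  have hle := hlip.hausdorffMeasure_image_le (by positivity : (0:ℝ) ≤ (m:ℝ))
    (Set.pi Set.univ (fun _ : Fin m => Icc (-1:ℝ) 1))
  have hpi : μH[(m : ℝ)] (Set.pi Set.univ (fun _ : Fin m => Icc (-1:ℝ) 1)) =
      volume (Set.pi Set.univ (fun _ : Fin m => Icc (-1:ℝ) 1)) := by
    have := hausdorffMeasure_pi_real (ι := Fin m)
    rw [Fintype.card_fin] at this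
    rw [this]
  have hvol : volume (Set.pi Set.univ (fun _ : Fin m => Icc (-1:ℝ) 1)) = (ENNReal.ofReal 2) ^ m := by
    rw [volume_pi_pi]
    simp [Real.volume_Icc]
    norm_num
  intro htop
  have h1 : μH[(m : ℝ)] (cubeQ m) ≤ (K : ℝ≥0∞) ^ (m:ℝ) * ((ENNReal.ofReal 2) ^ m) := by
    calc μH[(m : ℝ)] (cubeQ m) ≤ μH[(m : ℝ)] (e '' (Set.pi Set.univ (fun _ : Fin m => Icc (-1:ℝ) 1))) :=
        measure_mono hsub
    _ ≤ (K : ℝ≥0∞) ^ (m:ℝ) * μH[(m : ℝ)] (Set.pi Set.univ (fun _ : Fin m => Icc (-1:ℝ) 1)) := hle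
    _ = (K : ℝ≥0∞) ^ (m:ℝ) * ((ENNReal.ofReal 2) ^ m) := by rw [hpi, hvol]
  rw [htop] at h1
  have : (K : ℝ≥0∞) ^ (m:ℝ) * ((ENNReal.ofReal 2) ^ m) ≠ ⊤ := by
    apply ENNReal.mul_ne_top
    · exact ENNReal.rpow_ne_top_of_nonneg (by positivity) ENNReal.coe_ne_top
    · exact ENNReal.pow_ne_top ENNReal.ofReal_ne_top
  exact this (top_le_iff.1 h1)

noncomputable def faceUnion (n : ℕ) : Set (EuclideanSpace ℝ (Fin (n+1))) :=
  ⋃ i : Fin (n+1), (embFace i 1 '' cubeQ n ∪ embFace i (-1) '' cubeQ n)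

lemma faceUnion_subset (n : ℕ) :
    faceUnion n ⊆ {x : EuclideanSpace ℝ (Fin (n+1)) | 1 ≤ ‖x‖} := by
  intro x hx
  simp only [faceUnion, mem_iUnion, mem_union] at hx
  obtain ⟨i, h | h⟩ := hx <;> obtain ⟨y, -, rfl⟩ := h
  · calc (1:ℝ) = |embFace i 1 y i| := by rw [embFace_apply_same]; norm_num
    _ ≤ ‖embFace i 1 y‖ := abs_coord_le_norm _ _
  · calc (1:ℝ) = |embFace i (-1) y i| := by rw [embFace_apply_same]; norm_num
    _ ≤ ‖embFace i (-1) y‖ := abs_coord_le_norm _ _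

lemma sphere_subset_image (n : ℕ) :
    sphere (0 : EuclideanSpace ℝ (Fin (n+1))) 1 ⊆
      (fun x : EuclideanSpace ℝ (Fin (n+1)) => ‖x‖⁻¹ • x) '' faceUnion n := by
  intro u hu
  rw [mem_sphere_zero_iff_norm] at hu
  obtain ⟨i, -, hi⟩ := Finset.exists_max_image Finset.univ (fun j => |u j|) Finset.univ_nonempty
  have hm : 0 < |u i| := by
    rcases lt_or_eq_of_le (abs_nonneg (u i)) with h | h
    · exact h
    · exfalso
      have hz : u = 0 := by
        ext j
        have := hi j (Finset.mem_univ j)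
        rw [← h] at this
        simpa using abs_nonneg (u j) |>.antisymm' (by simpa using this)
      rw [hz] at hu; simp at hu
  set m : ℝ := |u i| with hmm
  set s : ℝ := if 0 ≤ u i then 1 else -1 with hs
  set w : EuclideanSpace ℝ (Fin (n+1)) := m⁻¹ • u with hw
  have hw_i : w i = s := by
    rw [hw, hs]
    show m⁻¹ * u i = _
    rcases le_or_gt 0 (u i) with h | h
    · have hne : u i ≠ 0 := fun h0 => by simp [hmm, h0] at hm
      rw [if_pos h, hmm, abs_of_nonneg h]
      field_simp
    · have hne : u i ≠ 0 := h.ne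
      rw [if_neg (not_le.2 h), hmm, abs_of_neg h]
      field_simp
  have hw_mem : ∀ j, |w j| ≤ 1 := by
    intro j
    have : w j = m⁻¹ * u j := rfl
    rw [this, abs_mul, abs_of_nonneg (by positivity : (0:ℝ) ≤ m⁻¹)]
    rw [inv_mul_le_iff₀ hm, mul_one]
    exact hi j (Finset.mem_univ j)
  set y : EuclideanSpace ℝ (Fin n) := (WithLp.equiv 2 (Fin n → ℝ)).symm
    (Fin.removeNth i ((WithLp.equiv 2 (Fin (n+1) → ℝ)) w)) with hy
  have hyQ : y ∈ cubeQ n := by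
    intro j
    exact hw_mem (i.succAbove j)
  have hins : embFace i s y = w := by
    simp only [embFace, hy, Equiv.apply_symm_apply]
    rw [← hw_i]
    rw [show w i = ((WithLp.equiv 2 (Fin (n+1) → ℝ)) w) i from rfl]
    rw [Fin.insertNth_self_removeNth]
    simp
  have hwD : w ∈ faceUnion n := by
    simp only [faceUnion, mem_iUnion, mem_union]
    refine ⟨i, ?_⟩
    rcases le_or_gt 0 (u i) with h | h
    · left; exact ⟨y, hyQ, by rw [hins.symm, hs]; simp [if_pos h]⟩
    · right; exact ⟨y, hyQ, by rw [hins.symm, hs]; simp [if_neg (not_le.2 h)]⟩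
  refine ⟨w, hwD, ?_⟩
  have hnw : ‖w‖ = m⁻¹ := by
    rw [hw, norm_smul, hu, mul_one, Real.norm_eq_abs, abs_of_nonneg (by positivity)]
  show ‖w‖⁻¹ • w = u
  rw [hnw, inv_inv, hw, smul_smul]
  rw [mul_inv_cancel₀ hm.ne', one_smul]

lemma sphere_hausdorff_ne_top (n : ℕ) :
    μH[(n : ℝ)] (Set.univ : Set ↥(sphere (0 : EuclideanSpace ℝ (Fin (n+1))) 1)) ≠ ⊤ := by
  have hn0 : (0:ℝ) ≤ (n:ℝ) := by positivity
  have hiso := (isometry_subtype_coe :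
    Isometry ((↑) : ↥(sphere (0 : EuclideanSpace ℝ (Fin (n+1))) 1) → EuclideanSpace ℝ (Fin (n+1))))
  have him := hiso.hausdorffMeasure_image (Or.inl hn0)
    (Set.univ : Set ↥(sphere (0 : EuclideanSpace ℝ (Fin (n+1))) 1))
  rw [image_univ, Subtype.range_coe] at him
  rw [← him]
  -- now bound the sphere in the ambient space
  have hfin : μH[(n : ℝ)] (faceUnion n) ≠ ⊤ := by
    have hle : μH[(n : ℝ)] (faceUnion n) ≤
        ∑' i : Fin (n+1), μH[(n : ℝ)] (embFace i 1 '' cubeQ n ∪ embFace i (-1) '' cubeQ n) :=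
      measure_iUnion_le _
    rw [tsum_fintype] at hle
    intro htop
    rw [htop, top_le_iff] at hle
    have : ∀ i : Fin (n+1),
        μH[(n : ℝ)] (embFace i 1 '' cubeQ n ∪ embFace i (-1) '' cubeQ n) < ⊤ := by
      intro i
      calc μH[(n : ℝ)] (embFace i 1 '' cubeQ n ∪ embFace i (-1) '' cubeQ n)
          ≤ μH[(n : ℝ)] (embFace i 1 '' cubeQ n) + μH[(n : ℝ)] (embFace i (-1) '' cubeQ n) :=
            measure_union_le _ _
      _ = μH[(n : ℝ)] (cubeQ n) + μH[(n : ℝ)] (cubeQ n) := by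
            rw [(embFace_isometry i 1).hausdorffMeasure_image (Or.inl hn0),
              (embFace_isometry i (-1)).hausdorffMeasure_image (Or.inl hn0)]
      _ < ⊤ := by
            rw [ENNReal.add_lt_top]
            exact ⟨(cubeQ_hausdorff_ne_top n).lt_top, (cubeQ_hausdorff_ne_top n).lt_top⟩
    have hs : ∑ i : Fin (n+1), μH[(n : ℝ)] (embFace i 1 '' cubeQ n ∪ embFace i (-1) '' cubeQ n) < ⊤ :=
      ENNReal.sum_lt_top.2 (fun i _ => this i)
    rw [hle] at hs
    exact (lt_irrefl _ hs)
  have hlip : LipschitzOnWith 2 (fun x : EuclideanSpace ℝ (Fin (n+1)) => ‖x‖⁻¹ • x)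
      (faceUnion n) := lip_normalize.mono (faceUnion_subset n)
  have hbound := hlip.hausdorffMeasure_image_le hn0
  intro htop
  have h1 : μH[(n : ℝ)] (sphere (0 : EuclideanSpace ℝ (Fin (n+1))) 1) ≤
      (2 : ℝ≥0∞) ^ (n:ℝ) * μH[(n : ℝ)] (faceUnion n) := by
    calc μH[(n : ℝ)] (sphere (0 : EuclideanSpace ℝ (Fin (n+1))) 1)
        ≤ μH[(n : ℝ)] ((fun x : EuclideanSpace ℝ (Fin (n+1)) => ‖x‖⁻¹ • x) '' faceUnion n) :=
          measure_mono (sphere_subset_image n)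
    _ ≤ (2 : ℝ≥0∞) ^ (n:ℝ) * μH[(n : ℝ)] (faceUnion n) := by exact_mod_cast hbound
  rw [htop, top_le_iff] at h1
  have : (2 : ℝ≥0∞) ^ (n:ℝ) * μH[(n : ℝ)] (faceUnion n) ≠ ⊤ :=
    ENNReal.mul_ne_top (ENNReal.rpow_ne_top_of_nonneg hn0 (by norm_num)) hfin
  exact this h1

section balls
variable {n : ℕ} {p q : Sph n}

lemma sum_sq_dist (hpq : (q : Euc n) = -(p : Euc n)) (z : Sph n) :
    dist z p ^ 2 + dist z q ^ 2 = 4 := by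
  rw [Subtype.dist_eq, Subtype.dist_eq, dist_eq_norm, dist_eq_norm, hpq, sub_neg_eq_add,
    norm_sub_sq_real, norm_add_sq_real, norm_coe_sphere, norm_coe_sphere]
  ring

lemma balls_cover (hpq : (q : Euc n) = -(p : Euc n)) {rX rY : ℝ} (hx : 0 ≤ rX) (hy : 0 ≤ rY) (h4 : 4 ≤ rX^2 + rY^2) :
    closedBall p rX ∪ closedBall q rY = Set.univ := by
  apply Set.eq_univ_of_forall
  intro z
  have hkey := sum_sq_dist hpq z
  rcases le_or_gt (dist z p) rX with h | h
  · exact Or.inl h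
  · right
    rw [mem_closedBall]
    nlinarith [dist_nonneg (x := z) (y := p), dist_nonneg (x := z) (y := q)]

lemma balls_inter_nonempty (hpq : (q : Euc n) = -(p : Euc n)) {rX rY : ℝ}
    (hne : (closedBall p rX ∩ closedBall q rY).Nonempty) :
    0 ≤ rX ∧ 0 ≤ rY ∧ 4 ≤ rX^2 + rY^2 := by
  obtain ⟨z, hz1, hz2⟩ := hne
  rw [mem_closedBall] at hz1 hz2
  have hkey := sum_sq_dist hpq z
  have d1 := dist_nonneg (x := z) (y := p)
  have d2 := dist_nonneg (x := z) (y := q)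
  exact ⟨d1.trans hz1, d2.trans hz2, by nlinarith⟩

end balls

/-- Given closed sets `X, Y` covering `Sⁿ`, closed balls `Bˣ, Bʸ` with antipodal centers
and matching volumes, and assuming the isoperimetric inequality on the sphere,
we get `Vol((X ∩ Y)_ε) ≥ Vol((Bˣ ∩ Bʸ)_ε)` for all `ε > 0`. -/
theorem stmt2 (n : ℕ)
    (X Y : Set ↥(sphere (0 : EuclideanSpace ℝ (Fin (n + 1))) 1))
    (hX : IsClosed X) (hY : IsClosed Y) (hXY : X ∪ Y = Set.univ)
    (p q : ↥(sphere (0 : EuclideanSpace ℝ (Fin (n + 1))) 1))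
    (hpq : (q : EuclideanSpace ℝ (Fin (n + 1))) = -(p : EuclideanSpace ℝ (Fin (n + 1))))
    (rX rY : ℝ)
    (hBX : μH[(n : ℝ)] (closedBall p rX) = μH[(n : ℝ)] X)
    (hBY : μH[(n : ℝ)] (closedBall q rY) = μH[(n : ℝ)] Y)
    (iso : ∀ A : Set ↥(sphere (0 : EuclideanSpace ℝ (Fin (n + 1))) 1), IsClosed A →
      ∀ (c : ↥(sphere (0 : EuclideanSpace ℝ (Fin (n + 1))) 1)) (ρ : ℝ),
        μH[(n : ℝ)] (closedBall c ρ) = μH[(n : ℝ)] A →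
        ∀ ε : ℝ, 0 < ε →
          μH[(n : ℝ)] (cthickening ε A) ≥ μH[(n : ℝ)] (cthickening ε (closedBall c ρ))) :
    ∀ ε : ℝ, 0 < ε →
      μH[(n : ℝ)] (cthickening ε (X ∩ Y)) ≥
        μH[(n : ℝ)] (cthickening ε (closedBall p rX ∩ closedBall q rY)) := by
  intro ε hε
  by_cases hne : (closedBall p rX ∩ closedBall q rY).Nonempty
  swap
  · rw [Set.not_nonempty_iff_eq_empty] at hne
    rw [hne, cthickening_empty, measure_empty]
    exact zero_le
  obtain ⟨hrX0, hrY0, h4⟩ := balls_inter_nonempty hpq hne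
  have hcover : closedBall p rX ∪ closedBall q rY = Set.univ := balls_cover hpq hrX0 hrY0 h4
  rcases Nat.eq_zero_or_pos n with hn | hn
  · -- n = 0 : the sphere consists of two points
    subst hn
    have h00 : ((0:ℕ):ℝ) = 0 := Nat.cast_zero
    have coordsq : ∀ z : Sph 0, (z : Euc 0) 0 ^ 2 = 1 := by
      intro z
      have h1 := norm_coe_sphere z
      rw [EuclideanSpace.norm_eq, Fin.sum_univ_one] at h1
      have h2 := congrArg (fun t => t ^ 2) h1
      simpa [Real.sq_sqrt (sq_nonneg _), sq_abs] using h2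
    have htwo : ∀ z : Sph 0, z = p ∨ z = q := by
      intro z
      have hzp : ((z : Euc 0) 0 - (p : Euc 0) 0) * ((z : Euc 0) 0 + (p : Euc 0) 0) = 0 := by
        have := coordsq z
        have := coordsq p
        nlinarith
      have hext : ∀ (a b : Euc 0), a 0 = b 0 → a = b := by
        intro a b h
        ext j
        have : j = 0 := Fin.fin_one_eq_zero j
        rw [this]; exact h
      rcases mul_eq_zero.1 hzp with h | h
      · left
        exact Subtype.ext (hext _ _ (by linarith))
      · right
        apply Subtype.ext
        rw [hpq]
        apply hext
        have : (-(p : Euc 0) : Euc 0) 0 = -((p : Euc 0) 0) := rfl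
        rw [this]; linarith
    have hdpq : dist p q = 2 := by
      rw [Subtype.dist_eq, dist_eq_norm, hpq, sub_neg_eq_add, ← two_smul ℝ, norm_smul,
        norm_coe_sphere]
      norm_num
    have hp_ne_q : p ≠ q := by
      intro h
      rw [h, dist_self] at hdpq
      norm_num at hdpq
    have huniv : (Set.univ : Set (Sph 0)) = {p, q} := by
      ext z
      simp only [Set.mem_univ, true_iff, Set.mem_insert_iff, Set.mem_singleton_iff]
      exact htwo z
    have hμuniv : μH[((0:ℕ):ℝ)] (Set.univ : Set (Sph 0)) = 2 := by
      rw [h00, huniv, Set.insert_eq,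
        measure_union (Set.disjoint_singleton.2 hp_ne_q) (measurableSet_singleton q),
        MeasureTheory.Measure.hausdorffMeasure_zero_singleton, MeasureTheory.Measure.hausdorffMeasure_zero_singleton]
      norm_num
    have hsing : ∀ (A : Set (Sph 0)) (w : Sph 0), w ∉ A → μH[((0:ℕ):ℝ)] A ≤ 1 := by
      intro A w hw
      rcases htwo w with rfl | rfl
      · have hsub : A ⊆ {q} := by
          intro z hz
          rcases htwo z with rfl | rfl
          · exact absurd hz hw
          · rfl
        calc μH[((0:ℕ):ℝ)] A ≤ μH[((0:ℕ):ℝ)] ({q} : Set (Sph 0)) := measure_mono hsub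
        _ = 1 := by rw [h00]; exact MeasureTheory.Measure.hausdorffMeasure_zero_singleton q
      · have hsub : A ⊆ {p} := by
          intro z hz
          rcases htwo z with rfl | rfl
          · rfl
          · exact absurd hz hw
        calc μH[((0:ℕ):ℝ)] A ≤ μH[((0:ℕ):ℝ)] ({p} : Set (Sph 0)) := measure_mono hsub
        _ = 1 := by rw [h00]; exact MeasureTheory.Measure.hausdorffMeasure_zero_singleton p
    have hball_univ : ∀ (c : Sph 0) (r : ℝ), 2 ≤ r → closedBall c r = Set.univ := by
      intro c r hr
      apply Set.eq_univ_of_forall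
      intro z
      rw [mem_closedBall, Subtype.dist_eq, dist_eq_norm]
      calc ‖(z : Euc 0) - (c : Euc 0)‖ ≤ ‖(z : Euc 0)‖ + ‖(c : Euc 0)‖ := norm_sub_le _ _
      _ ≤ r := by rw [norm_coe_sphere, norm_coe_sphere]; linarith
    have hset_univ : ∀ (A : Set (Sph 0)), IsClosed A →
        μH[((0:ℕ):ℝ)] A = μH[((0:ℕ):ℝ)] (Set.univ : Set (Sph 0)) → A = Set.univ := by
      intro A _ hA
      by_contra hne'
      obtain ⟨w, hw⟩ := (Set.ne_univ_iff_exists_notMem A).1 hne'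
      have h1 : μH[((0:ℕ):ℝ)] A ≤ 1 := hsing A w hw
      rw [hA, hμuniv] at h1
      norm_num at h1
    have hbig : 2 ≤ rX ∨ 2 ≤ rY := by
      obtain ⟨z, hz1, hz2⟩ := hne
      rw [mem_closedBall] at hz1 hz2
      rcases htwo z with rfl | rfl
      · right; rw [← hdpq]; exact hz2
      · left; rw [← hdpq, dist_comm]; exact hz1
    rcases hbig with hbig | hbig
    · have hBXu : closedBall p rX = Set.univ := hball_univ p rX hbig
      have hXu : X = Set.univ := hset_univ X hX (by rw [← hBX, hBXu])
      rw [hXu, Set.univ_inter, hBXu, Set.univ_inter]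
      exact iso Y hY q rY hBY ε hε
    · have hBYu : closedBall q rY = Set.univ := hball_univ q rY hbig
      have hYu : Y = Set.univ := hset_univ Y hY (by rw [← hBY, hBYu])
      rw [hYu, Set.inter_univ, hBYu, Set.inter_univ]
      exact iso X hX p rX hBX ε hε
  · -- n ≥ 1
    have hpc : IsPreconnected (Set.univ : Set (Sph n)) := by
      have hrank : 1 < Module.rank ℝ (Euc n) := by
        rw [← Module.finrank_eq_rank, finrank_euclideanSpace_fin]
        exact_mod_cast Nat.lt_of_lt_of_le Nat.one_lt_two (by omega)
      have hconn : IsConnected (sphere (0 : Euc n) 1) := isConnected_sphere hrank 0 zero_le_one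
      have := Subtype.connectedSpace hconn
      exact isPreconnected_univ
    set μ := (μH[(n : ℝ)] : Measure (Sph n)) with hμ
    set K := X ∩ Y with hK
    have hXe : IsClosed (cthickening ε X) := isClosed_cthickening
    have hYemeas : MeasurableSet (cthickening ε Y) := isClosed_cthickening.measurableSet
    have hunion : cthickening ε X ∪ cthickening ε Y = Set.univ := by
      apply Set.eq_univ_of_univ_subset
      rw [← cthickening_union, ← hXY]
      exact hXY ▸ (self_subset_cthickening _)
    have hBunion : cthickening ε (closedBall p rX) ∪ cthickening ε (closedBall q rY) = Set.univ := by
      apply Set.eq_univ_of_univ_subset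
      rw [← cthickening_union, ← hcover]
      exact hcover ▸ (self_subset_cthickening _)
    have hBinter : cthickening ε (closedBall p rX ∩ closedBall q rY) ⊆
        cthickening ε (closedBall p rX) ∩ cthickening ε (closedBall q rY) :=
      Set.subset_inter
        (cthickening_subset_of_subset ε Set.inter_subset_left)
        (cthickening_subset_of_subset ε Set.inter_subset_right)
    have e1 : μ (cthickening ε X) + μ (cthickening ε Y)
        = μ Set.univ + μ (cthickening ε X ∩ cthickening ε Y) := by
      rw [← measure_union_add_inter _ hYemeas, hunion]
    have e2 : μ (cthickening ε (closedBall p rX)) + μ (cthickening ε (closedBall q rY))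
        = μ Set.univ + μ (cthickening ε (closedBall p rX) ∩ cthickening ε (closedBall q rY)) := by
      rw [← measure_union_add_inter _ isClosed_cthickening.measurableSet, hBunion]
    have hiso1 := iso X hX p rX hBX ε hε
    have hiso2 := iso Y hY q rY hBY ε hε
    have hincl := incl hX hY hXY hpc hε
    have main : μ (cthickening ε (closedBall p rX ∩ closedBall q rY)) + μ Set.univ
        ≤ μ (cthickening ε K) + μ Set.univ := by
      calc μ (cthickening ε (closedBall p rX ∩ closedBall q rY)) + μ Set.univ
          ≤ μ (cthickening ε (closedBall p rX) ∩ cthickening ε (closedBall q rY)) + μ Set.univ :=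
            add_le_add_left (measure_mono hBinter) _
      _ = μ (cthickening ε (closedBall p rX)) + μ (cthickening ε (closedBall q rY)) := by
            rw [e2]; exact add_comm _ _
      _ ≤ μ (cthickening ε X) + μ (cthickening ε Y) := add_le_add hiso1 hiso2
      _ = μ (cthickening ε X ∩ cthickening ε Y) + μ Set.univ := by rw [e1]; exact add_comm _ _
      _ ≤ μ (cthickening ε K) + μ Set.univ :=
            add_le_add_left (measure_mono hincl) _
    exact (ENNReal.add_le_add_iff_right (sphere_hausdorff_ne_top n)).1 main
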